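/- Let F be a free group and let a, b ∈ F. If there exist nonzero integers m, n such that a^m = b^n and a^m ≠ 1, then a and b commute: ab = ba. -/

import Mathlib

namespace Stmt13Aux

open FreeGroup List

variable {β : Type*} [DecidableEq β]

set_option linter.unusedSectionVars false

/-- Two letters do not cancel. -/
def Ok (p q : β × Bool) : Prop := ¬(p.1 = q.1 ∧ p.2 = !q.2)

lemma chain_reduce : ∀ {l : List (β × Bool)}, Chain' Ok l → FreeGroup.reduce l = l
  | [], _ => rfl
  | [p], _ => rfl
  | p :: q :: t, h => by
    obtain ⟨hpq, h'⟩ := List.isChain_cons_cons.mp h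
    have ih := chain_reduce h'
    rw [reduce.cons, ih]
    simp only [if_neg hpq]

lemma reduce_chain : ∀ {l : List (β × Bool)}, FreeGroup.reduce l = l → Chain' Ok l
  | [], _ => List.isChain_nil
  | p :: l, h => by
    rw [reduce.cons] at h
    cases hr : FreeGroup.reduce l with
    | nil =>
      rw [hr] at h
      have h : [p] = p :: l := h
      have : l = [] := by simpa using congrArg List.tail h.symm
      subst this; exact List.isChain_singleton p
    | cons q t =>
      rw [hr] at h
      have h : (if p.1 = q.1 ∧ p.2 = !q.2 then t else p :: q :: t) = p :: l := h
      by_cases hc : p.1 = q.1 ∧ p.2 = !q.2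
      · rw [if_pos hc] at h
        exfalso
        have hle : (FreeGroup.reduce l).length ≤ l.length := Red.length_le (reduce.red)
        rw [hr] at hle
        have := congrArg List.length h
        simp only [List.length_cons] at this hle
        omega
      · rw [if_neg hc] at h
        have hl : l = q :: t := by simpa using (congrArg List.tail h).symm
        have : FreeGroup.reduce l = l := by rw [hr, hl]
        have := reduce_chain this
        rw [hl] at this ⊢
        exact List.isChain_cons_cons.mpr ⟨hc, this⟩

lemma cons_eq_append_singleton {γ : Type*} :
    ∀ (l : List γ) (a b : γ), a :: l = l ++ [b] →
      l = List.replicate l.length a ∧ a = b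
  | [], a, b, h => by simpa using h
  | c :: t, a, b, h => by
    simp only [List.cons_append, List.cons.injEq] at h
    obtain ⟨rfl, h2⟩ := h
    obtain ⟨h3, rfl⟩ := cons_eq_append_singleton t a b h2
    refine ⟨?_, rfl⟩
    rw [List.length_cons, List.replicate_succ, ← h3]

/-- If a nontrivial element commutes with a generator, its word is a replicate of a
letter on that generator. -/
lemma replicate_of_comm {z : FreeGroup β} (hz : z ≠ 1) {x : β}
    (hcomm : z * FreeGroup.of x = FreeGroup.of x * z) :
    ∃ s : β × Bool, s.1 = x ∧ z.toWord = List.replicate z.toWord.length s := by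
  set l := z.toWord with hl
  have hred : FreeGroup.reduce l = l := reduce_toWord z
  have hchain : Chain' Ok l := reduce_chain hred
  have hne : l ≠ [] := fun h => hz (toWord_eq_nil_iff.mp h)
  obtain ⟨p, t, hpt⟩ := List.exists_cons_of_ne_nil hne
  -- compute toWord (of x * z)
  have e2 : (FreeGroup.of x * z).toWord
      = if x = p.1 ∧ true = !p.2 then t else (x, true) :: l := by
    have : FreeGroup.of x * z = FreeGroup.mk ((x, true) :: l) := by
      rw [← FreeGroup.mk_toWord (x := z), ← hl, FreeGroup.of, FreeGroup.mul_mk]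
      rfl
    rw [this, FreeGroup.toWord_mk, reduce.cons, hred, hpt]
  -- compute toWord (z * of x)
  have e1mk : z * FreeGroup.of x = FreeGroup.mk (l ++ [(x, true)]) := by
    rw [← FreeGroup.mk_toWord (x := z), ← hl, FreeGroup.of, FreeGroup.mul_mk]
  have hcomm' : (z * FreeGroup.of x).toWord = (FreeGroup.of x * z).toWord := by
    rw [hcomm]
  by_cases hlast : l.getLast hne = (x, false)
  · -- last letter cancels
    have hsplit : l = l.dropLast ++ [(x, false)] := by
      conv_lhs => rw [← List.dropLast_append_getLast hne, hlast]
    have e1 : (z * FreeGroup.of x).toWord = l.dropLast := by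
      rw [e1mk, FreeGroup.toWord_mk]
      have hstep : Red.Step (l.dropLast ++ (x, false) :: (x, !false) :: [])
          (l.dropLast ++ []) := Red.Step.not
      have : l ++ [(x, true)] = l.dropLast ++ (x, false) :: (x, !false) :: [] := by
        conv_lhs => rw [hsplit]
        simp
      rw [this, reduce.Step.eq hstep, List.append_nil]
      exact chain_reduce (hchain.prefix (List.dropLast_prefix l))
    rw [e1, e2] at hcomm'
    by_cases hc : x = p.1 ∧ true = !p.2
    · rw [if_pos hc] at hcomm'
      -- l.dropLast = t, l = p :: t, p = (x, false)
      have hp : p = (x, false) := by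
        obtain ⟨h1, h2⟩ := hc
        have : p.2 = false := by
          cases hb : p.2 <;> simp [hb] at h2 ⊢
        exact Prod.ext h1.symm this
      have : p :: t = t ++ [(x, false)] := by
        rw [← hpt, hsplit, hcomm']
      obtain ⟨h3, h4⟩ := cons_eq_append_singleton t p (x, false) this
      refine ⟨p, by rw [hp], ?_⟩
      rw [hpt, h3, List.length_cons, List.length_replicate, List.replicate_succ]
    · rw [if_neg hc] at hcomm'
      exfalso
      have h2 := congrArg List.length hcomm'
      rw [List.length_dropLast, List.length_cons] at h2
      have hlen : l.length ≠ 0 := by simpa using hne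
      omega
  · -- no cancellation at the end
    have e1 : (z * FreeGroup.of x).toWord = l ++ [(x, true)] := by
      rw [e1mk, FreeGroup.toWord_mk]
      apply chain_reduce
      apply hchain.append (List.isChain_singleton _)
      intro a ha b hb
      rw [List.getLast?_eq_getLast hne, Option.mem_some_iff] at ha
      simp only [List.head?_cons, Option.mem_some_iff] at hb
      subst ha; subst hb
      rintro ⟨h1, h2⟩
      exact hlast (Prod.ext h1 (by simpa using h2))
    rw [e1, e2] at hcomm'
    by_cases hc : x = p.1 ∧ true = !p.2
    · rw [if_pos hc] at hcomm'
      exfalso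
      have := congrArg List.length hcomm'
      have : l.length + 1 = t.length := by simpa using this
      have : l.length = t.length + 1 := by rw [hpt]; simp
      omega
    · rw [if_neg hc] at hcomm'
      obtain ⟨h3, h4⟩ := cons_eq_append_singleton l (x, true) (x, true) hcomm'.symm
      exact ⟨(x, true), rfl, h3⟩

/-- The center of a free group on at least two generators is trivial. -/
lemma eq_one_of_comm {z : FreeGroup β} {x y : β} (hxy : x ≠ y)
    (hx : z * FreeGroup.of x = FreeGroup.of x * z)
    (hy : z * FreeGroup.of y = FreeGroup.of y * z) : z = 1 := by
  by_contra hz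
  obtain ⟨s, hs1, hs2⟩ := replicate_of_comm hz hx
  obtain ⟨s', hs1', hs2'⟩ := replicate_of_comm hz hy
  have hne : z.toWord ≠ [] := fun h => hz (toWord_eq_nil_iff.mp h)
  have hpos : 0 < z.toWord.length := List.length_pos_of_ne_nil hne
  have hmem : s ∈ z.toWord := by
    rw [hs2]
    exact List.mem_replicate.2 ⟨by omega, rfl⟩
  have hss' : s = s' := List.eq_of_mem_replicate (by rw [← hs2']; exact hmem)
  exact hxy (by rw [← hs1, ← hs1', hss'])

/-- Free groups on a subsingleton type are commutative. -/
lemma comm_of_subsingleton [Subsingleton β] (u v : FreeGroup β) : u * v = v * u := by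
  cases isEmpty_or_nonempty β with
  | inl h => exact Subsingleton.elim _ _
  | inr h =>
    obtain ⟨x₀⟩ := h
    have key : ∀ g : FreeGroup β, ∃ k : ℤ, g = FreeGroup.of x₀ ^ k := by
      intro g
      induction g with
      | C1 => exact ⟨0, by simp⟩
      | of x => exact ⟨1, by rw [Subsingleton.elim x x₀]; simp⟩
      | inv_of x hx =>
        obtain ⟨k, hk⟩ := hx
        exact ⟨-k, by rw [hk, ← zpow_neg]⟩
      | mul g g' hg hg' =>
        obtain ⟨k, hk⟩ := hg
        obtain ⟨k', hk'⟩ := hg'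
        exact ⟨k + k', by rw [hk, hk', zpow_add]⟩
    obtain ⟨k, hk⟩ := key u
    obtain ⟨k', hk'⟩ := key v
    rw [hk, hk', ← zpow_add, ← zpow_add, add_comm]

end Stmt13Aux

/-- In a free group, if `a` and `b` admit a common nontrivial power (`a ^ m = b ^ n ≠ 1`
for some nonzero integers `m, n`), then `a` and `b` commute. -/
theorem stmt13 {α : Type*} (a b : FreeGroup α) (m n : ℤ) (hm : m ≠ 0) (hn : n ≠ 0)
    (h : a ^ m = b ^ n) (hne : a ^ m ≠ 1) :
    a * b = b * a := by
  classical
  let H : Subgroup (FreeGroup α) := Subgroup.centralizer ({a ^ m} : Set (FreeGroup α))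
  have ha : a ∈ H := Subgroup.mem_centralizer_iff.2 (by
    intro g hg
    rw [Set.mem_singleton_iff] at hg
    rw [hg]
    exact ((Commute.refl a).zpow_left m).eq)
  have hb : b ∈ H := Subgroup.mem_centralizer_iff.2 (by
    intro g hg
    rw [Set.mem_singleton_iff] at hg
    rw [hg, h]
    exact ((Commute.refl b).zpow_left n).eq)
  have hzH : a ^ m ∈ H := Subgroup.mem_centralizer_iff.2 (by
    intro g hg
    rw [Set.mem_singleton_iff] at hg
    rw [hg])
  haveI : IsFreeGroup H := inferInstance
  let e := IsFreeGroup.toFreeGroup H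
  let Z : H := ⟨a ^ m, hzH⟩
  have hZcomm : ∀ g : FreeGroup (IsFreeGroup.Generators H), e Z * g = g * e Z := by
    intro g
    obtain ⟨w, rfl⟩ := e.surjective g
    rw [← map_mul, ← map_mul]
    congr 1
    ext
    simp only [Subgroup.coe_mul]
    exact w.2 (a ^ m) (Set.mem_singleton _)
  have hZne : e Z ≠ 1 := by
    intro hc
    have : Z = 1 := e.injective (by rw [hc, map_one])
    exact hne (by simpa [Z] using congrArg Subtype.val this)
  rcases subsingleton_or_nontrivial (IsFreeGroup.Generators H) with hss | hnt
  · have h1 : e ⟨a, ha⟩ * e ⟨b, hb⟩ = e ⟨b, hb⟩ * e ⟨a, ha⟩ :=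
      Stmt13Aux.comm_of_subsingleton _ _
    have h2 : (⟨a, ha⟩ : H) * ⟨b, hb⟩ = ⟨b, hb⟩ * ⟨a, ha⟩ := by
      apply e.injective
      rw [map_mul, map_mul, h1]
    simpa using congrArg Subtype.val h2
  · obtain ⟨x, y, hxy⟩ := hnt
    exact absurd (Stmt13Aux.eq_one_of_comm hxy (hZcomm _) (hZcomm _)) hZne
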